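/- For every integer N ≥ 2, the polynomial Q_N(x) = Σ_{n=0}^{N} (N!/n!) x^n has no rational root. -/

import Mathlib

open Polynomial

/-- `Qpoly N` is `N!` times the truncated exponential series,
`Q_N(x) = ∑_{n=0}^{N} (N!/n!) xⁿ`, a monic integer polynomial of degree `N`. -/
noncomputable def Qpoly (N : ℕ) : Polynomial ℤ :=
  ∑ n ∈ Finset.range (N + 1), C ((N.factorial / n.factorial : ℕ) : ℤ) * X ^ n

/-- The `p`-adic valuation of `n!` is less than `n`. -/
lemma padic_fact_lt (p n : ℕ) (hp : p.Prime) (hn : 1 ≤ n) :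
    padicValNat p n.factorial < n := by
  haveI : Fact p.Prime := ⟨hp⟩
  have hleg := sub_one_mul_padicValNat_factorial (p := p) n
  have hs : 1 ≤ (p.digits n).sum := by
    rcases Nat.eq_zero_or_pos (p.digits n).sum with h | h
    · exfalso
      have hne : p.digits n ≠ [] := Nat.digits_ne_nil_iff_ne_zero.mpr (by omega)
      have := Nat.getLast_digit_ne_zero p (m := n) (by omega)
      have hmem := List.getLast_mem hne
      exact this (List.sum_eq_zero_iff.mp h _ hmem)
    · exact h
  have hple : 1 ≤ p - 1 := by have := hp.two_le; omega
  have : padicValNat p n.factorial ≤ (p - 1) * padicValNat p n.factorial :=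
    Nat.le_mul_of_pos_left _ (by omega)
  omega

lemma numDerangements_pos (n : ℕ) : 0 < numDerangements (n + 2) := by
  induction n with
  | zero => decide
  | succ k ih =>
    rw [numDerangements_add_two]
    positivity

lemma alt_sum_eq_derangements (N : ℕ) :
    ∑ n ∈ Finset.range (N + 1), ((N.factorial / n.factorial : ℕ) : ℤ) * (-1) ^ n
      = (numDerangements N : ℤ) := by
  rw [numDerangements_sum]
  refine Finset.sum_congr rfl fun k hk => ?_
  have hk' : k ≤ N := Finset.mem_range_succ_iff.mp hk
  have : (k + 1).ascFactorial (N - k) = N.factorial / k.factorial := by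
    rw [Nat.ascFactorial_eq_div]
    rw [Nat.add_sub_cancel' hk']
  rw [this, mul_comm]

lemma key_int (N : ℕ) (m : ℤ) (hm : 1 < m.natAbs) :
    ∑ n ∈ Finset.range (N + 1), ((N.factorial / n.factorial : ℕ) : ℤ) * m ^ n ≠ 0 := by
  obtain ⟨p, hp, hpm⟩ := Nat.exists_prime_and_dvd (by omega : m.natAbs ≠ 1)
  haveI : Fact p.Prime := ⟨hp⟩
  have hpmz : (p : ℤ) ∣ m := Int.dvd_natAbs.mp (Int.natCast_dvd_natCast.mpr hpm)
  set a := padicValNat p N.factorial with ha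
  intro h0
  -- each term with n ≥ 1 is divisible by p^(a+1)
  have hdvd : ∀ i ∈ Finset.range N,
      (p : ℤ) ^ (a + 1) ∣ ((N.factorial / (i+1).factorial : ℕ) : ℤ) * m ^ (i + 1) := by
    intro i hi
    set n := i + 1
    set b := padicValNat p n.factorial with hb
    have hnN : n ≤ N := Finset.mem_range.mp hi
    have hfd : n.factorial ∣ N.factorial := Nat.factorial_dvd_factorial hnN
    have hmulv : a = padicValNat p (N.factorial / n.factorial) + b := by
      rw [ha]
      conv_lhs => rw [← Nat.div_mul_cancel hfd]
      rw [padicValNat.mul (Nat.div_pos (Nat.factorial_le hnN) n.factorial_pos).ne'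
        n.factorial_ne_zero]
    have hd1 : (p : ℤ) ^ (a - b) ∣ ((N.factorial / n.factorial : ℕ) : ℤ) := by
      have : p ^ (a - b) ∣ N.factorial / n.factorial := by
        have := pow_padicValNat_dvd (p := p) (n := N.factorial / n.factorial)
        rwa [show padicValNat p (N.factorial / n.factorial) = a - b by omega] at this
      exact_mod_cast Int.natCast_dvd_natCast.mpr this
    have hd2 : (p : ℤ) ^ n ∣ m ^ n := pow_dvd_pow_of_dvd hpmz n
    have hblt : b < n := padic_fact_lt p n hp (by omega)
    calc (p : ℤ) ^ (a + 1) ∣ (p : ℤ) ^ (a - b) * (p : ℤ) ^ n := by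
          rw [← pow_add]; exact pow_dvd_pow _ (by omega)
      _ ∣ _ := mul_dvd_mul hd1 hd2
  have hsum : (p : ℤ) ^ (a + 1) ∣ ∑ i ∈ Finset.range N,
      ((N.factorial / (i+1).factorial : ℕ) : ℤ) * m ^ (i + 1) :=
    Finset.dvd_sum hdvd
  rw [Finset.sum_range_succ'] at h0
  simp only [Nat.factorial_zero, Nat.div_one, pow_zero, mul_one] at h0
  have hNf : (p : ℤ) ^ (a + 1) ∣ (N.factorial : ℤ) := by
    have : (N.factorial : ℤ) = -∑ i ∈ Finset.range N,
        ((N.factorial / (i+1).factorial : ℕ) : ℤ) * m ^ (i + 1) := by linarith [h0]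
    rw [this]
    exact hsum.neg_right
  have : p ^ (a + 1) ∣ N.factorial := by exact_mod_cast hNf
  exact pow_succ_padicValNat_not_dvd N.factorial_ne_zero this

lemma Qpoly_monic (N : ℕ) (_hN : 1 ≤ N) : (Qpoly N).Monic := by
  have h : Qpoly N = X ^ N + ∑ n ∈ Finset.range N, C ((N.factorial / n.factorial : ℕ) : ℤ) * X ^ n := by
    rw [Qpoly, Finset.sum_range_succ, Nat.div_self N.factorial_pos]
    push_cast
    rw [C_1, one_mul, add_comm]
  rw [h]
  refine monic_X_pow_add (lt_of_le_of_lt (Polynomial.degree_sum_le _ _) ?_)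
  refine (Finset.sup_lt_iff (WithBot.bot_lt_coe (N:ℕ))).mpr fun n hn => ?_
  refine lt_of_le_of_lt (degree_C_mul_X_pow_le n _) ?_
  have := Finset.mem_range.mp hn
  exact WithBot.coe_lt_coe.mpr this

lemma Qpoly_eval (N : ℕ) (m : ℤ) :
    Polynomial.eval m (Qpoly N)
      = ∑ n ∈ Finset.range (N + 1), ((N.factorial / n.factorial : ℕ) : ℤ) * m ^ n := by
  rw [Qpoly, Polynomial.eval_finset_sum]
  simp

lemma key_int_all (N : ℕ) (hN : 2 ≤ N) (m : ℤ) :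
    ∑ n ∈ Finset.range (N + 1), ((N.factorial / n.factorial : ℕ) : ℤ) * m ^ n ≠ 0 := by
  rcases lt_or_ge m.natAbs 2 with hm | hm
  · interval_cases h : m.natAbs
    · -- m = 0
      have hm0 : m = 0 := Int.natAbs_eq_zero.mp h
      subst hm0
      rw [Finset.sum_range_succ']
      simp only [Nat.factorial_zero, Nat.div_one, pow_zero, mul_one, zero_pow, mul_zero,
        Nat.succ_ne_zero, Finset.sum_const_zero, zero_add, ne_eq, Int.natCast_eq_zero]
      positivity
    · -- m = 1 or m = -1
      rcases (by omega : m = 1 ∨ m = -1) with h1 | h1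
      · -- m = 1
        subst h1
        have hpos : ∀ n ∈ Finset.range (N + 1),
            (0:ℤ) < ((N.factorial / n.factorial : ℕ) : ℤ) * 1 ^ n := by
          intro n hn
          have hn' : n ≤ N := Finset.mem_range_succ_iff.mp hn
          have : 0 < N.factorial / n.factorial :=
            Nat.div_pos (Nat.factorial_le hn') n.factorial_pos
          simp only [one_pow, mul_one]
          exact_mod_cast this
        have := Finset.sum_pos hpos ⟨0, Finset.mem_range.mpr (by omega)⟩
        exact this.ne'
      · -- m = -1
        have hm1 : m = -1 := by omega
        subst hm1
        rw [alt_sum_eq_derangements]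
        obtain ⟨k, rfl⟩ : ∃ k, N = k + 2 := ⟨N - 2, by omega⟩
        have := numDerangements_pos k
        exact_mod_cast this.ne'
  · exact key_int N m hm

/-- For every integer `N ≥ 2`, the polynomial `Q_N` has no rational root. -/
theorem stmt_0 (N : ℕ) (hN : 2 ≤ N) (q : ℚ) :
    Polynomial.aeval q (Qpoly N) ≠ 0 := by
  intro h0
  have hmonic : (Qpoly N).Monic := Qpoly_monic N (by omega)
  have hint : IsIntegral ℤ q := ⟨Qpoly N, hmonic, h0⟩
  obtain ⟨m, hm⟩ := IsIntegrallyClosed.isIntegral_iff.mp hint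
  rw [← hm, aeval_algebraMap_apply] at h0
  have hz : Polynomial.aeval m (Qpoly N) = 0 := by
    have : Function.Injective (algebraMap ℤ ℚ) := fun a b hab => by exact_mod_cast hab
    exact this (by simpa using h0)
  have hev : Polynomial.eval m (Qpoly N) = 0 := by
    rwa [Polynomial.aeval_def, Polynomial.eval₂_eq_eval_map, Algebra.algebraMap_self, Polynomial.map_id] at hz
  rw [Qpoly_eval] at hev
  exact key_int_all N hN m hev
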